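/- Let F : ℝⁿ → ℝ be C² and X : [0,T] → ℝⁿ a solution of Ẍ_t = F''(X_t)F'(X_t) with positive semidefinite F''. Define φ_t = Ẋ_t + F'(X_t). Then t ↦ |φ_t|² is non-decreasing on [0,T], and for all t ∈ (0,T), (T−t)|φ_t|² ≤ C_T + 2F(X_T) − 2F(X_0), where C_T = ∫₀ᵀ (|Ẋ_s|² + |F'(X_s)|²) ds. -/

import Mathlib

open Set intervalIntegral

/-- With positive semidefinite Hessian, `t ↦ |φ_t|²` is non-decreasing along a Newton
interpolation, and `(T-t)|φ_t|² ≤ C_T + 2F(X_T) - 2F(X_0)`. -/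
theorem stmt_16 (d : ℕ) (T : ℝ) (hT : 0 < T)
    (F : EuclideanSpace ℝ (Fin d) → ℝ)
    (F' : EuclideanSpace ℝ (Fin d) → EuclideanSpace ℝ (Fin d))
    (F'' : EuclideanSpace ℝ (Fin d) → EuclideanSpace ℝ (Fin d) →L[ℝ] EuclideanSpace ℝ (Fin d))
    (hgrad : ∀ x, HasGradientAt F (F' x) x)
    (hhess : ∀ x, HasFDerivAt F' (F'' x) x)
    (hpos : ∀ x v, 0 ≤ (inner ℝ (F'' x v) v : ℝ))
    (X X' : ℝ → EuclideanSpace ℝ (Fin d))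
    (hX : ∀ t ∈ Set.Icc (0:ℝ) T, HasDerivAt X (X' t) t)
    (hNewton : ∀ t ∈ Set.Icc (0:ℝ) T, HasDerivAt X' (F'' (X t) (F' (X t))) t) :
    MonotoneOn (fun t => ‖X' t + F' (X t)‖ ^ 2) (Set.Icc 0 T) ∧
      ∀ t ∈ Set.Ioo (0:ℝ) T,
        (T - t) * ‖X' t + F' (X t)‖ ^ 2 ≤
          (∫ s in (0:ℝ)..T, (‖X' s‖ ^ 2 + ‖F' (X s)‖ ^ 2)) + 2 * F (X T) - 2 * F (X 0) := by
  set φ : ℝ → EuclideanSpace ℝ (Fin d) := fun t => X' t + F' (X t) with hφdef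
  set g : ℝ → ℝ := fun t => ‖φ t‖ ^ 2 with hgdef
  -- derivative of φ
  have hφd : ∀ t ∈ Icc (0:ℝ) T, HasDerivAt φ (F'' (X t) (φ t)) t := by
    intro t ht
    have h1 : HasDerivAt (fun s => F' (X s)) (F'' (X t) (X' t)) t :=
      (hhess (X t)).comp_hasDerivAt t (hX t ht)
    have := (hNewton t ht).add h1
    simp only [hφdef, map_add]
    rw [add_comm (F'' (X t) (X' t))]
    exact this
  -- derivative of g
  have hgd : ∀ t ∈ Icc (0:ℝ) T,
      HasDerivAt g (2 * (inner ℝ (F'' (X t) (φ t)) (φ t) : ℝ)) t := by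
    intro t ht
    have h := (hφd t ht).inner ℝ (hφd t ht)
    have heq : (fun s => (inner ℝ (φ s) (φ s) : ℝ)) = g := by
      funext s; exact real_inner_self_eq_norm_sq (φ s)
    rw [heq] at h
    have h2 : (inner ℝ (φ t) (F'' (X t) (φ t)) : ℝ) + inner ℝ (F'' (X t) (φ t)) (φ t)
        = 2 * inner ℝ (F'' (X t) (φ t)) (φ t) := by
      rw [real_inner_comm (φ t)]; ring
    rwa [h2] at h
  -- continuity of g on Icc
  have hgc : ContinuousOn g (Icc 0 T) := fun t ht =>
    (hgd t ht).continuousAt.continuousWithinAt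
  -- monotonicity
  have hmono : MonotoneOn g (Icc 0 T) := by
    apply monotoneOn_of_deriv_nonneg (convex_Icc 0 T) hgc
    · intro t ht
      rw [interior_Icc] at ht
      exact ((hgd t (Ioo_subset_Icc_self ht)).differentiableAt).differentiableWithinAt
    · intro t ht
      rw [interior_Icc] at ht
      rw [(hgd t (Ioo_subset_Icc_self ht)).deriv]
      linarith [hpos (X t) (φ t)]
  refine ⟨hmono, ?_⟩
  -- continuity facts
  have hXc : ContinuousOn X (Icc 0 T) := fun t ht => (hX t ht).continuousAt.continuousWithinAt
  have hX'c : ContinuousOn X' (Icc 0 T) := fun t ht =>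
    (hNewton t ht).continuousAt.continuousWithinAt
  have hF'c : Continuous F' := by
    have : ∀ x, ContinuousAt F' x := fun x => (hhess x).continuousAt
    exact continuous_iff_continuousAt.2 this
  have hF'Xc : ContinuousOn (fun s => F' (X s)) (Icc 0 T) := hF'c.comp_continuousOn hXc
  have hInnc : ContinuousOn (fun s => 2 * (inner ℝ (X' s) (F' (X s)) : ℝ)) (Icc 0 T) :=
    continuousOn_const.mul (hX'c.inner hF'Xc)
  have hCc : ContinuousOn (fun s => ‖X' s‖ ^ 2 + ‖F' (X s)‖ ^ 2) (Icc 0 T) :=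
    ((hX'c.norm.pow 2).add (hF'Xc.norm.pow 2))
  have huIcc : uIcc (0:ℝ) T = Icc 0 T := uIcc_of_le hT.le
  -- integrabilities
  have hgI : IntervalIntegrable g MeasureTheory.volume 0 T := by
    exact ContinuousOn.intervalIntegrable (by rw [huIcc]; exact hgc)
  have hCI : IntervalIntegrable (fun s => ‖X' s‖ ^ 2 + ‖F' (X s)‖ ^ 2)
      MeasureTheory.volume 0 T := by
    exact ContinuousOn.intervalIntegrable (by rw [huIcc]; exact hCc)
  have hII : IntervalIntegrable (fun s => 2 * (inner ℝ (X' s) (F' (X s)) : ℝ))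
      MeasureTheory.volume 0 T := by
    exact ContinuousOn.intervalIntegrable (by rw [huIcc]; exact hInnc)
  -- FTC for 2 F(X s)
  have hFX : ∀ s ∈ uIcc (0:ℝ) T,
      HasDerivAt (fun s => 2 * F (X s)) (2 * (inner ℝ (X' s) (F' (X s)) : ℝ)) s := by
    intro s hs
    rw [huIcc] at hs
    have h1 : HasDerivAt (fun s => F (X s))
        ((InnerProductSpace.toDual ℝ _ (F' (X s))) (X' s)) s :=
      ((hgrad (X s)).hasFDerivAt).comp_hasDerivAt s (hX s hs)
    have h2 : ((InnerProductSpace.toDual ℝ _ (F' (X s))) (X' s) : ℝ)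
        = inner ℝ (X' s) (F' (X s)) := by
      rw [InnerProductSpace.toDual_apply_apply, real_inner_comm]
    rw [h2] at h1
    simpa [mul_comm] using h1.const_mul (2:ℝ)
  have hFTC : (∫ s in (0:ℝ)..T, 2 * (inner ℝ (X' s) (F' (X s)) : ℝ))
      = 2 * F (X T) - 2 * F (X 0) :=
    integral_eq_sub_of_hasDerivAt hFX hII
  -- expand g
  have hgeq : ∀ s, g s = (‖X' s‖ ^ 2 + ‖F' (X s)‖ ^ 2) + 2 * (inner ℝ (X' s) (F' (X s)) : ℝ) := by
    intro s
    rw [hgdef, hφdef]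
    simp only []
    rw [norm_add_sq_real]; ring
  have hginteq : (∫ s in (0:ℝ)..T, g s)
      = (∫ s in (0:ℝ)..T, (‖X' s‖ ^ 2 + ‖F' (X s)‖ ^ 2)) + 2 * F (X T) - 2 * F (X 0) := by
    have : (∫ s in (0:ℝ)..T, g s)
        = (∫ s in (0:ℝ)..T, ((‖X' s‖ ^ 2 + ‖F' (X s)‖ ^ 2)
            + 2 * (inner ℝ (X' s) (F' (X s)) : ℝ))) := by
      apply intervalIntegral.integral_congr
      intro s _; exact hgeq s
    rw [this, intervalIntegral.integral_add hCI hII, hFTC]; ring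
  -- final bound
  intro t ht
  have htIcc : t ∈ Icc (0:ℝ) T := Ioo_subset_Icc_self ht
  have hgsubI : IntervalIntegrable g MeasureTheory.volume t T := by
    exact ContinuousOn.intervalIntegrable
      (by rw [uIcc_of_le ht.2.le]; exact hgc.mono (Icc_subset_Icc ht.1.le le_rfl))
  have hg0I : IntervalIntegrable g MeasureTheory.volume 0 t := by
    exact ContinuousOn.intervalIntegrable
      (by rw [uIcc_of_le ht.1.le]; exact hgc.mono (Icc_subset_Icc le_rfl ht.2.le))
  have h1 : (T - t) * g t ≤ ∫ s in t..T, g s := by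
    have hc : (∫ _ in t..T, g t) = (T - t) * g t := by
      rw [intervalIntegral.integral_const, smul_eq_mul]
    rw [← hc]
    apply intervalIntegral.integral_mono_on ht.2.le intervalIntegrable_const hgsubI
    intro s hs
    exact hmono htIcc ⟨ht.1.le.trans hs.1, hs.2⟩ hs.1
  have h2 : (∫ s in t..T, g s) ≤ ∫ s in (0:ℝ)..T, g s := by
    rw [← intervalIntegral.integral_add_adjacent_intervals hg0I hgsubI]
    have h3 : 0 ≤ ∫ s in (0:ℝ)..t, g s := by
      apply intervalIntegral.integral_nonneg ht.1.le
      intro s _; positivity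
    linarith
  calc (T - t) * ‖X' t + F' (X t)‖ ^ 2 = (T - t) * g t := rfl
    _ ≤ ∫ s in (0:ℝ)..T, g s := h1.trans h2
    _ = _ := hginteq
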